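/- Let b be a real number with |1+3b| ≤ 2 and define f₃(z) = z(1 + (1+3b)z + z²)/((1+z)(1-z²)) on the open unit disk D. Then for all z ∈ D \ {0}, Re((1+z)f₃(z)/z) > 0. -/

import Mathlib

theorem f3_in_class (b : ℝ) (hb : |1 + 3 * b| ≤ 2)
    (f₃ : ℂ → ℂ)
    (hf : ∀ z, f₃ z = z * (1 + (1 + 3 * b) * z + z ^ 2) / ((1 + z) * (1 - z ^ 2))) :
    ∀ z ∈ Metric.ball (0 : ℂ) 1, z ≠ 0 → 0 < ((1 + z) * f₃ z / z).re := by
  intro z hz hz0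
  have habs : ‖z‖ < 1 := by
    simpa [Complex.dist_eq] using Metric.mem_ball.mp hz
  have hns : Complex.normSq z < 1 := by
    have := Complex.sq_norm z
    nlinarith [norm_nonneg z]
  have hx2 : z.re ^ 2 + z.im ^ 2 < 1 := by
    have : Complex.normSq z = z.re ^ 2 + z.im ^ 2 := by
      rw [Complex.normSq_apply]; ring
    linarith [this ▸ hns]
  have h1 : (1 : ℂ) + z ≠ 0 := by
    intro h
    have : z = -1 := by linear_combination h
    rw [this] at habs; simp at habs
  have h2 : (1 : ℂ) - z ^ 2 ≠ 0 := by
    intro h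
    have hz2 : z ^ 2 = 1 := by linear_combination -h
    have : ‖z‖ ^ 2 = 1 := by
      rw [← norm_pow, hz2]; simp
    nlinarith [norm_nonneg z]
  have key : (1 + z) * f₃ z / z = (1 + (1 + 3 * b) * z + z ^ 2) / (1 - z ^ 2) := by
    rw [hf]
    field_simp
  rw [key, Complex.div_re]
  have hD : 0 < Complex.normSq (1 - z ^ 2) := Complex.normSq_pos.mpr h2
  set x := z.re
  set y := z.im
  have hc1 : -2 ≤ 1 + 3 * b := by cases abs_le.mp hb; linarith
  have hc2 : 1 + 3 * b ≤ 2 := by cases abs_le.mp hb; linarith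
  have hre1 : (1 + (1 + 3 * b : ℝ) * z + z ^ 2 : ℂ).re = 1 + (1 + 3 * b) * x + x ^ 2 - y ^ 2 := by
    simp [Complex.add_re, Complex.mul_re, pow_two, Complex.mul_im]
    ring
  have him1 : (1 + (1 + 3 * b : ℝ) * z + z ^ 2 : ℂ).im = (1 + 3 * b) * y + 2 * x * y := by
    simp [Complex.add_im, Complex.mul_im, pow_two, Complex.mul_re]
    ring
  have hre2 : ((1 : ℂ) - z ^ 2).re = 1 - x ^ 2 + y ^ 2 := by
    simp [pow_two, Complex.mul_re]
    ring
  have him2 : ((1 : ℂ) - z ^ 2).im = -(2 * x * y) := by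
    simp [pow_two, Complex.mul_im]
    ring
  have hcast : ((1 : ℂ) + 3 * (b : ℂ)) = ((1 + 3 * b : ℝ) : ℂ) := by push_cast; ring
  rw [hcast, hre1, him1, hre2, him2]
  rw [← add_div, lt_div_iff₀ hD]
  have hpos : 0 < (1 - (x ^ 2 + y ^ 2)) * (1 + x ^ 2 + y ^ 2 + (1 + 3 * b) * x) := by
    apply mul_pos
    · linarith
    · have hx1 : x ^ 2 < 1 := by nlinarith [sq_nonneg y]
      rcases le_or_gt 0 x with hx | hx
      · nlinarith [sq_nonneg (1 - x), mul_nonneg hx (by linarith : (0:ℝ) ≤ (1 + 3 * b) + 2)]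
      · nlinarith [sq_nonneg (1 + x), mul_nonneg (by linarith : (0:ℝ) ≤ -x) (by linarith : (0:ℝ) ≤ 2 - (1 + 3 * b))]
  nlinarith [hpos]
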